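/- For coprime positive integers p and q, the Dedekind sums satisfy the reciprocity law s(p,q) + s(q,p) = (p² + q² + 1)/(12pq) - 1/4, where s(p,q) = (1/(4q)) ∑_{j=1}^{q-1} cot(πj/q) cot(πpj/q). -/

import Mathlib

open Real Finset

noncomputable section

lemma exp_sq (x : ℝ) : Complex.exp (2*x*Complex.I) = Complex.exp (x*Complex.I) ^ 2 := by
  rw [sq, ← Complex.exp_add]; ring_nf

lemma sin_ne_of_exp (x : ℝ) (h : Complex.exp (2*x*Complex.I) ≠ 1) : Complex.sin x ≠ 0 := by
  intro hs0
  apply h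
  rw [Complex.sin] at hs0
  have h1 : Complex.exp (-(x:ℂ)*Complex.I) = Complex.exp (x*Complex.I) := by
    have hI : (Complex.I : ℂ) ≠ 0 := Complex.I_ne_zero
    have h0 : (Complex.exp (-(x:ℂ)*Complex.I) - Complex.exp (x*Complex.I)) * Complex.I = 0 :=
      ((div_eq_zero_iff.mp hs0).resolve_right (by norm_num))
    have := (mul_eq_zero.mp h0).resolve_right hI
    linear_combination this
  calc Complex.exp (2*x*Complex.I) = Complex.exp (x*Complex.I) * Complex.exp (x*Complex.I) := by
        rw [← Complex.exp_add]; ring_nf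
    _ = Complex.exp (x*Complex.I) * Complex.exp (-(x:ℂ)*Complex.I) := by rw [h1]
    _ = 1 := by rw [← Complex.exp_add]; ring_nf; exact Complex.exp_zero

/-- cot via complex exponential -/
lemma cot_exp (x : ℝ) (h : Complex.exp (2*x*Complex.I) ≠ 1) :
    (Real.cot x : ℂ) = Complex.I * (Complex.exp (2*x*Complex.I) + 1) / (Complex.exp (2*x*Complex.I) - 1) := by
  have hu : Complex.exp (x*Complex.I) ≠ 0 := Complex.exp_ne_zero _
  have hs : Complex.sin x ≠ 0 := sin_ne_of_exp x h
  have hne : Complex.exp (2*x*Complex.I) - 1 ≠ 0 := sub_ne_zero.mpr h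
  have hexp : Complex.exp (-(x:ℂ)*Complex.I) = (Complex.exp (x*Complex.I))⁻¹ := by
    rw [← Complex.exp_neg]; ring_nf
  rw [eq_div_iff hne, Complex.ofReal_cot, Complex.cot_eq_cos_div_sin, div_mul_eq_mul_div,
    div_eq_iff hs, Complex.cos, Complex.sin, exp_sq, hexp]
  field_simp
  linear_combination (Complex.exp ((x:ℂ)*Complex.I)^4 - 1) * Complex.I_sq

lemma geom_root {q : ℕ} (ω : ℂ) (h1 : ω^q = 1) (h2 : ω ≠ 1) :
    ∑ m ∈ range q, ω^m = 0 := by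
  rw [geom_sum_eq h2, h1]; simp

lemma inv_root {q : ℕ} (ω : ℂ) (h1 : ω^q = 1) (h2 : ω ≠ 1) :
    (ω - 1) * ∑ m ∈ range q, (m:ℂ)*ω^m = q := by
  have t := Finset.sum_range_sub (fun m => (m:ℂ)*ω^m) q
  have step : (ω - 1) * ∑ m ∈ range q, (m:ℂ)*ω^m
      = ∑ m ∈ range q, ((((m+1:ℕ):ℂ)*ω^(m+1) - (m:ℂ)*ω^m) - ω^m * ω) := by
    rw [Finset.mul_sum]
    refine Finset.sum_congr rfl fun m _ => ?_
    push_cast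
    ring
  rw [step, Finset.sum_sub_distrib, t, ← Finset.sum_mul, geom_root ω h1 h2, h1]
  push_cast
  ring

lemma sum_exp_pow (q : ℕ) (hq : 0 < q) (m : ℕ) :
    ∑ j ∈ range q, (Complex.exp (2*π*Complex.I/q))^(j*m) = if q ∣ m then (q:ℂ) else 0 := by
  have hζ := Complex.isPrimitiveRoot_exp q hq.ne'
  by_cases hd : q ∣ m
  · simp only [if_pos hd]
    have h1 : Complex.exp (2*π*Complex.I/q) ^ m = 1 := (hζ.pow_eq_one_iff_dvd m).mpr hd
    have : ∀ j, (Complex.exp (2*π*Complex.I/q))^(j*m) = 1 := by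
      intro j; rw [mul_comm j m, pow_mul, h1, one_pow]
    simp [this]
  · simp only [if_neg hd]
    have h1 : Complex.exp (2*π*Complex.I/q) ^ m ≠ 1 := fun hc => hd ((hζ.pow_eq_one_iff_dvd m).mp hc)
    have h2 : (Complex.exp (2*π*Complex.I/q) ^ m) ^ q = 1 := by
      rw [← pow_mul, mul_comm m q, pow_mul, hζ.pow_eq_one, one_pow]
    calc ∑ j ∈ range q, (Complex.exp (2*π*Complex.I/q))^(j*m)
        = ∑ j ∈ range q, (Complex.exp (2*π*Complex.I/q)^m)^j := by
          refine Finset.sum_congr rfl fun j _ => ?_; rw [← pow_mul, mul_comm j m, pow_mul]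
      _ = 0 := geom_root _ h2 h1

lemma sum_exp_pow_Ico (q : ℕ) (hq : 0 < q) (m : ℕ) :
    ∑ j ∈ Finset.Ico 1 q, (Complex.exp (2*π*Complex.I/q))^(j*m) = (if q ∣ m then (q:ℂ) else 0) - 1 := by
  have := sum_exp_pow q hq m
  rw [Finset.range_eq_Ico, Finset.sum_eq_sum_Ico_succ_bot hq] at this
  norm_num at this
  linear_combination this

lemma sum_cast_id (q : ℕ) : (∑ m ∈ range q, (m:ℂ)) * 2 = q*(q-1) := by
  induction q with
  | zero => simp
  | succ n ih => rw [Finset.sum_range_succ]; push_cast; push_cast at ih; ring_nf; ring_nf at ih; linear_combination ih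

lemma sum_cast_sq (q : ℕ) : (∑ m ∈ range q, (m:ℂ)^2) * 6 = q*(q-1)*(2*q-1) := by
  induction q with
  | zero => simp
  | succ n ih => rw [Finset.sum_range_succ]; push_cast; push_cast at ih; ring_nf; ring_nf at ih; linear_combination ih

lemma sumA (q : ℕ) (hq : 0 < q) :
    ∑ j ∈ Finset.Ico 1 q, ∑ m ∈ range q, (m:ℂ) * (Complex.exp (2*π*Complex.I/q))^(j*m)
      = -((q:ℂ)*(q-1)/2) := by
  rw [Finset.sum_comm]
  have : ∀ m ∈ range q, ∑ j ∈ Finset.Ico 1 q, (m:ℂ) * (Complex.exp (2*π*Complex.I/q))^(j*m)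
      = (m:ℂ) * ((if q ∣ m then (q:ℂ) else 0) - 1) := by
    intro m _
    rw [← Finset.mul_sum, sum_exp_pow_Ico q hq m]
  rw [Finset.sum_congr rfl this]
  have z : ∀ m ∈ range q, (m:ℂ) * (if q ∣ m then (q:ℂ) else 0) = 0 := by
    intro m hm
    rcases Nat.eq_zero_or_pos m with h | h
    · simp [h]
    · rw [if_neg, mul_zero]
      exact Nat.not_dvd_of_pos_of_lt h (Finset.mem_range.mp hm)
  calc ∑ m ∈ range q, (m:ℂ) * ((if q ∣ m then (q:ℂ) else 0) - 1)
      = ∑ m ∈ range q, ((m:ℂ) * (if q ∣ m then (q:ℂ) else 0) - (m:ℂ)) := by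
        refine Finset.sum_congr rfl fun m _ => ?_; ring
    _ = ∑ m ∈ range q, (m:ℂ) * (if q ∣ m then (q:ℂ) else 0) - ∑ m ∈ range q, (m:ℂ) :=
        Finset.sum_sub_distrib _ _
    _ = 0 - ∑ m ∈ range q, (m:ℂ) := by rw [Finset.sum_eq_zero z]
    _ = -((q:ℂ)*(q-1)/2) := by linear_combination (-1/2 : ℂ) * sum_cast_id q

lemma inner_ind (q : ℕ) (hq : 0 < q) (m : ℕ) (hm : m ∈ range q) :
    ∑ n ∈ range q, (n:ℂ) * (if q ∣ (m+n) then (q:ℂ) else 0)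
      = if m = 0 then 0 else (q:ℂ)*((q:ℂ)-(m:ℂ)) := by
  have hmq := Finset.mem_range.mp hm
  by_cases h0 : m = 0
  · subst h0
    rw [if_pos rfl]
    apply Finset.sum_eq_zero
    intro n hn
    rcases Nat.eq_zero_or_pos n with h | h
    · simp [h]
    · rw [if_neg, mul_zero]
      simpa using Nat.not_dvd_of_pos_of_lt h (Finset.mem_range.mp hn)
  · rw [if_neg h0]
    have hm1 : 1 ≤ m := Nat.one_le_iff_ne_zero.mpr h0
    rw [Finset.sum_eq_single_of_mem (q - m) (Finset.mem_range.mpr (by omega))]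
    · rw [if_pos (by rw [Nat.add_sub_cancel' hmq.le] : q ∣ (m + (q - m)))]
      push_cast [Nat.cast_sub hmq.le]
      ring
    · intro n hn hne
      rw [if_neg, mul_zero]
      intro hdvd
      have hn' := Finset.mem_range.mp hn
      rcases hdvd with ⟨c, hc⟩
      have hc2 : c < 2 := by nlinarith
      interval_cases c <;> omega

lemma sumA2 (q : ℕ) (hq : 0 < q) :
    ∑ j ∈ Finset.Ico 1 q, (∑ m ∈ range q, (m:ℂ) * (Complex.exp (2*π*Complex.I/q))^(j*m))^2
      = (q:ℂ) * ((q:ℂ)*((q:ℂ)-1)*((q:ℂ)+1)/6) - ((q:ℂ)*((q:ℂ)-1)/2)^2 := by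
  set ζ := Complex.exp (2*π*Complex.I/q) with hζdef
  have step1 : ∀ j ∈ Finset.Ico 1 q, (∑ m ∈ range q, (m:ℂ) * ζ^(j*m))^2
      = ∑ m ∈ range q, ∑ n ∈ range q, (m:ℂ)*(n:ℂ)*ζ^(j*(m+n)) := by
    intro j _
    rw [sq, Finset.sum_mul_sum]
    refine Finset.sum_congr rfl fun m _ => Finset.sum_congr rfl fun n _ => ?_
    rw [mul_add (j) m n, pow_add]
    ring
  rw [Finset.sum_congr rfl step1, Finset.sum_comm]
  have step2 : ∀ m ∈ range q, ∑ j ∈ Finset.Ico 1 q, ∑ n ∈ range q, (m:ℂ)*(n:ℂ)*ζ^(j*(m+n))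
      = ∑ n ∈ range q, (m:ℂ)*(n:ℂ)*((if q ∣ (m+n) then (q:ℂ) else 0) - 1) := by
    intro m _
    rw [Finset.sum_comm]
    refine Finset.sum_congr rfl fun n _ => ?_
    rw [← Finset.mul_sum, sum_exp_pow_Ico q hq (m+n)]
  rw [Finset.sum_congr rfl step2]
  have step3 : ∀ m ∈ range q, ∑ n ∈ range q, (m:ℂ)*(n:ℂ)*((if q ∣ (m+n) then (q:ℂ) else 0) - 1)
      = (m:ℂ) * (∑ n ∈ range q, (n:ℂ)*(if q ∣ (m+n) then (q:ℂ) else 0)) - (m:ℂ) * ∑ n ∈ range q, (n:ℂ) := by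
    intro m _
    rw [Finset.mul_sum, Finset.mul_sum, ← Finset.sum_sub_distrib]
    refine Finset.sum_congr rfl fun n _ => by ring
  rw [Finset.sum_congr rfl step3]
  have step4 : ∀ m ∈ range q, (m:ℂ) * (∑ n ∈ range q, (n:ℂ)*(if q ∣ (m+n) then (q:ℂ) else 0)) - (m:ℂ) * ∑ n ∈ range q, (n:ℂ)
      = ((m:ℂ)*(q:ℂ)*((q:ℂ)-(m:ℂ)) - (m:ℂ) * ∑ n ∈ range q, (n:ℂ)) := by
    intro m hm
    rw [inner_ind q hq m hm]
    by_cases h0 : m = 0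
    · subst h0; simp
    · rw [if_neg h0]; ring
  rw [Finset.sum_congr rfl step4, Finset.sum_sub_distrib, ← Finset.sum_mul]
  have e1 := sum_cast_id q
  have e2 := sum_cast_sq q
  have expand : ∑ m ∈ range q, (m:ℂ)*(q:ℂ)*((q:ℂ)-(m:ℂ))
      = (q:ℂ)*(q:ℂ)*(∑ m ∈ range q, (m:ℂ)) - (q:ℂ)*(∑ m ∈ range q, (m:ℂ)^2) := by
    rw [Finset.mul_sum, Finset.mul_sum, ← Finset.sum_sub_distrib]
    refine Finset.sum_congr rfl fun m _ => by ring
  rw [expand]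
  linear_combination ((q:ℂ)*(q:ℂ)/2 - (∑ m ∈ range q, (m:ℂ))/2 - (q:ℂ)*((q:ℂ)-1)/4) * e1 - (q:ℂ)/6 * e2

lemma cot_to_A (q : ℕ) (hq : 0 < q) (j : ℕ) (hj : j ∈ Finset.Ico 1 q) :
    ((Real.cot (π*(j:ℝ)/q) : ℂ))
      = Complex.I * ((q:ℂ) + 2*∑ m ∈ range q, (m:ℂ)*(Complex.exp (2*π*Complex.I/q))^(j*m)) / (q:ℂ) := by
  set ζ := Complex.exp (2*π*Complex.I/q) with hζdef
  have hζ := Complex.isPrimitiveRoot_exp q hq.ne'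
  obtain ⟨hj1, hjq⟩ := Finset.mem_Ico.mp hj
  set ω := ζ^j with hωdef
  set A := ∑ m ∈ range q, (m:ℂ)*ζ^(j*m) with hAdef
  have hω1 : ω ≠ 1 := by
    rw [hωdef, Ne, hζ.pow_eq_one_iff_dvd]
    exact Nat.not_dvd_of_pos_of_lt hj1 hjq
  have hωq : ω^q = 1 := by
    rw [hωdef, ← pow_mul, mul_comm j q, pow_mul, hζ.pow_eq_one, one_pow]
  have hA' : (ω - 1) * ∑ m ∈ range q, (m:ℂ)*ω^m = q := inv_root ω hωq hω1
  have hA : (ω - 1) * A = q := by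
    rw [hA'.symm, hAdef]
    congr 1
    refine Finset.sum_congr rfl fun m _ => ?_
    rw [hωdef, ← pow_mul]
  have hx : Complex.exp (2*((π*(j:ℝ)/q : ℝ):ℂ)*Complex.I) = ω := by
    rw [hωdef, hζdef, ← Complex.exp_nat_mul]
    congr 1
    have hq0 : (q:ℂ) ≠ 0 := Nat.cast_ne_zero.mpr hq.ne'
    push_cast
    ring
  have hd : ω - 1 ≠ 0 := sub_ne_zero.mpr hω1
  have hq0 : (q:ℂ) ≠ 0 := Nat.cast_ne_zero.mpr hq.ne'
  have hcot : ((Real.cot (π*(j:ℝ)/q) : ℂ)) = Complex.I * (ω + 1) / (ω - 1) := by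
    rw [cot_exp _ (by rw [hx]; exact hω1), hx]
  rw [hcot, div_eq_div_iff hd hq0]
  linear_combination (-2*Complex.I) * hA

lemma cot_sq_sum (q : ℕ) (hq : 0 < q) :
    ∑ j ∈ Finset.Ico 1 q, (Real.cot (π*(j:ℝ)/q))^2 = ((q:ℝ)-1)*((q:ℝ)-2)/3 := by
  set ζ := Complex.exp (2*π*Complex.I/q) with hζdef
  have hq0 : (q:ℂ) ≠ 0 := Nat.cast_ne_zero.mpr hq.ne'
  rw [← Complex.ofReal_inj]
  simp only [Complex.ofReal_sum, Complex.ofReal_pow, Complex.ofReal_div, Complex.ofReal_mul,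
    Complex.ofReal_sub, Complex.ofReal_one, Complex.ofReal_ofNat, Complex.ofReal_natCast]
  have key : ∀ j ∈ Finset.Ico 1 q, ((Real.cot (π*(j:ℝ)/q) : ℂ))^2
      = (-((q:ℂ)^2) - 4*(q:ℂ)*(∑ m ∈ range q, (m:ℂ)*ζ^(j*m)) - 4*(∑ m ∈ range q, (m:ℂ)*ζ^(j*m))^2)/(q:ℂ)^2 := by
    intro j hj
    rw [cot_to_A q hq j hj, ← hζdef]
    field_simp
    linear_combination ((q:ℂ)+2*(∑ m ∈ range q, (m:ℂ)*ζ^(j*m)))^2 * Complex.I_sq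
  rw [Finset.sum_congr rfl key, ← Finset.sum_div, Finset.sum_sub_distrib, Finset.sum_sub_distrib,
    Finset.sum_const, Nat.card_Ico, ← Finset.mul_sum, sumA q hq]
  have h4 : ∑ j ∈ Finset.Ico 1 q, 4*(∑ m ∈ range q, (m:ℂ)*ζ^(j*m))^2
      = 4 * ((q:ℂ) * ((q:ℂ)*((q:ℂ)-1)*((q:ℂ)+1)/6) - ((q:ℂ)*((q:ℂ)-1)/2)^2) := by
    rw [← Finset.mul_sum, sumA2 q hq]
  rw [h4, nsmul_eq_mul, Nat.cast_sub hq]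
  push_cast
  field_simp
  ring

lemma cot_sum_zero (q : ℕ) : ∑ j ∈ Finset.Ico 1 q, Real.cot (π*(j:ℝ)/q) = 0 := by
  refine Finset.sum_involution (fun a _ => q - a) ?_ ?_ (fun a ha => ?_) (fun a ha => ?_)
  · intro a ha
    obtain ⟨h1, h2⟩ := Finset.mem_Ico.mp ha
    have hq0 : (q:ℝ) ≠ 0 := by
      have : 0 < q := lt_of_le_of_lt (Nat.zero_le _) h2
      exact Nat.cast_ne_zero.mpr this.ne'
    have hcast : (π*((q - a : ℕ) : ℝ)/q) = π - π*(a:ℝ)/q := by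
      rw [Nat.cast_sub h2.le]; field_simp
    simp only [hcast]
    rw [Real.cot_eq_cos_div_sin, Real.cot_eq_cos_div_sin, Real.cos_pi_sub, Real.sin_pi_sub]
    ring
  · intro a ha hne
    intro heq
    apply hne
    obtain ⟨h1, h2⟩ := Finset.mem_Ico.mp ha
    have hq2 : q = 2*a := by omega
    have ha0 : (a:ℝ) ≠ 0 := Nat.cast_ne_zero.mpr (by omega)
    have : π*(a:ℝ)/q = π/2 := by
      rw [hq2]; push_cast; field_simp
    rw [this, Real.cot_eq_cos_div_sin, Real.cos_pi_div_two, zero_div]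
  · obtain ⟨h1, h2⟩ := Finset.mem_Ico.mp ha
    exact Finset.mem_Ico.mpr ⟨by omega, by omega⟩
  · obtain ⟨h1, h2⟩ := Finset.mem_Ico.mp ha
    omega

lemma cot_three (x y : ℝ) (hx : Real.sin x ≠ 0) (hy : Real.sin y ≠ 0) (hxy : Real.sin (x+y) ≠ 0) :
    Real.cot x * Real.cot y - Real.cot (x+y) * Real.cot x - Real.cot (x+y) * Real.cot y = 1 := by
  rw [Real.cot_eq_cos_div_sin, Real.cot_eq_cos_div_sin, Real.cot_eq_cos_div_sin]
  field_simp
  rw [Real.sin_add, Real.cos_add]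
  ring_nf

lemma sum_inv_lin (p : ℕ) (hp : 0 < p) (z : ℂ) (hz : z^p ≠ 1) :
    ∑ k ∈ range p, 1/(z * (Complex.exp (2*π*Complex.I/p))^k - 1) = p/(z^p - 1) := by
  set ζ := Complex.exp (2*π*Complex.I/p) with hζdef
  have hζ := Complex.isPrimitiveRoot_exp p hp.ne'
  have hwp : ∀ k, (z * ζ^k)^p = z^p := by
    intro k
    rw [mul_pow, ← pow_mul, mul_comm k p, pow_mul, hζ.pow_eq_one, one_pow, mul_one]
  have hne : ∀ k, z*ζ^k - 1 ≠ 0 := by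
    intro k h
    apply hz
    rw [← hwp k, sub_eq_zero.mp h, one_pow]
  have hz' : z^p - 1 ≠ 0 := sub_ne_zero.mpr hz
  have key : ∀ k ∈ range p, 1/(z * ζ^k - 1) = (∑ m ∈ range p, (z*ζ^k)^m)/(z^p - 1) := by
    intro k _
    rw [div_eq_div_iff (hne k) hz', one_mul, geom_sum_mul, hwp k]
  rw [Finset.sum_congr rfl key, ← Finset.sum_div]
  congr 1
  rw [Finset.sum_comm]
  have inner : ∀ m ∈ range p, ∑ k ∈ range p, (z*ζ^k)^m = z^m * (if p ∣ m then (p:ℂ) else 0) := by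
    intro m _
    rw [← sum_exp_pow p hp m, Finset.mul_sum]
    refine Finset.sum_congr rfl fun k _ => ?_
    rw [mul_pow, ← pow_mul, mul_comm k m]
  rw [Finset.sum_congr rfl inner]
  rw [Finset.sum_eq_single 0]
  · simp
  · intro m hm hm0
    rw [if_neg (Nat.not_dvd_of_pos_of_lt (Nat.pos_of_ne_zero hm0) (Finset.mem_range.mp hm)), mul_zero]
  · intro h; exact absurd (Finset.mem_range.mpr hp) h

lemma cot_mul_sum (p : ℕ) (hp : 0 < p) (θ : ℝ) (h : Complex.exp (2*((p:ℝ)*θ:ℝ)*Complex.I) ≠ 1) :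
    ∑ k ∈ range p, Real.cot (θ + k*π/p) = p * Real.cot ((p:ℝ)*θ) := by
  set ζ := Complex.exp (2*π*Complex.I/p) with hζdef
  have hζ := Complex.isPrimitiveRoot_exp p hp.ne'
  set E := Complex.exp (2*(θ:ℝ)*Complex.I) with hEdef
  have hp0 : (p:ℂ) ≠ 0 := Nat.cast_ne_zero.mpr hp.ne'
  have hEp : E^p = Complex.exp (2*((p:ℝ)*θ:ℝ)*Complex.I) := by
    rw [hEdef, ← Complex.exp_nat_mul]
    congr 1
    push_cast
    ring
  have harg : ∀ k : ℕ, Complex.exp (2*((θ + k*π/p : ℝ):ℂ)*Complex.I) = E * ζ^k := by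
    intro k
    rw [hEdef, hζdef, ← Complex.exp_nat_mul, ← Complex.exp_add]
    congr 1
    push_cast
    field_simp
  have hwp : ∀ k : ℕ, (E * ζ^k)^p = E^p := by
    intro k
    rw [mul_pow, ← pow_mul, mul_comm k p, pow_mul, hζ.pow_eq_one, one_pow, mul_one]
  have hne1 : ∀ k : ℕ, E*ζ^k ≠ 1 := by
    intro k hc
    apply h
    rw [← hEp, ← hwp k, hc, one_pow]
  have hne : ∀ k : ℕ, E*ζ^k - 1 ≠ 0 := fun k => sub_ne_zero.mpr (hne1 k)
  have hEpne : E^p - 1 ≠ 0 := sub_ne_zero.mpr (by rw [hEp]; exact h)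
  rw [← Complex.ofReal_inj]
  simp only [Complex.ofReal_sum, Complex.ofReal_mul, Complex.ofReal_natCast]
  have key : ∀ k ∈ range p, ((Real.cot (θ + k*π/p) : ℝ) : ℂ) = Complex.I + 2*Complex.I * (1/(E*ζ^k - 1)) := by
    intro k _
    rw [cot_exp _ (by rw [harg k]; exact hne1 k), harg k]
    have := hne k
    field_simp
    ring
  rw [Finset.sum_congr rfl key, Finset.sum_add_distrib, Finset.sum_const, Finset.card_range,
    ← Finset.mul_sum, sum_inv_lin p hp E (by rw [hEp]; exact h)]
  rw [cot_exp ((p:ℝ)*θ) h, ← hEp, nsmul_eq_mul]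
  field_simp
  ring


lemma exp_ne_one_of_sin_ne (x : ℝ) (h : Real.sin x ≠ 0) :
    Complex.exp (2*(x:ℝ)*Complex.I) ≠ 1 := by
  intro hc
  apply h
  have h2 : Complex.exp ((x:ℂ)*Complex.I) * Complex.exp ((x:ℂ)*Complex.I) = 1 := by
    rw [← Complex.exp_add, show (x:ℂ)*Complex.I + (x:ℂ)*Complex.I = 2*(x:ℝ)*Complex.I by push_cast; ring, hc]
  have hinv : Complex.exp (-(x:ℂ)*Complex.I) = Complex.exp ((x:ℂ)*Complex.I) := by
    rw [neg_mul, Complex.exp_neg]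
    exact inv_eq_of_mul_eq_one_left h2
  have hs : Complex.sin x = 0 := by
    rw [Complex.sin, hinv, sub_self, zero_mul, zero_div]
  rw [← Complex.ofReal_sin] at hs
  exact_mod_cast hs

lemma sin_pi_mul_ne (a b : ℕ) (hb : 0 < b) (h : ¬ b ∣ a) : Real.sin (π*(a:ℝ)/b) ≠ 0 := by
  intro hs
  rw [Real.sin_eq_zero_iff] at hs
  obtain ⟨n, hn⟩ := hs
  have hb0 : (b:ℝ) ≠ 0 := Nat.cast_ne_zero.mpr hb.ne'
  have hπ : (π:ℝ) ≠ 0 := Real.pi_ne_zero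
  have hr : (n:ℝ)*b = a := by
    apply mul_left_cancel₀ hπ
    field_simp at hn
    linear_combination π * hn
  have hzr : ((a:ℤ):ℝ) = (((b*n : ℤ)):ℝ) := by push_cast; linear_combination -hr
  have hz : (a:ℤ) = b * n := by exact_mod_cast hzr
  apply h
  have : (b:ℤ) ∣ (a:ℤ) := ⟨n, hz⟩
  exact_mod_cast this

/-- Dedekind sum `s(p,q) = (1/(4q)) ∑_{j=1}^{q-1} cot(πj/q) cot(πpj/q)`. -/
noncomputable def dedekindSum (p q : ℕ) : ℝ :=
  (1 / (4 * (q : ℝ))) *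
    ∑ j ∈ Finset.Ico 1 q, Real.cot (π * j / q) * Real.cot (π * p * j / q)

/-- Dedekind reciprocity: for coprime positive integers `p, q`,
`s(p,q) + s(q,p) = (p² + q² + 1)/(12pq) - 1/4`. -/
theorem dedekind_reciprocity (p q : ℕ) (hp : 0 < p) (hq : 0 < q)
    (hpq : Nat.Coprime p q) :
    dedekindSum p q + dedekindSum q p =
      ((p : ℝ) ^ 2 + (q : ℝ) ^ 2 + 1) / (12 * p * q) - 1 / 4 := by
  have hp0 : (p:ℝ) ≠ 0 := Nat.cast_ne_zero.mpr hp.ne'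
  have hq0 : (q:ℝ) ≠ 0 := Nat.cast_ne_zero.mpr hq.ne'
  -- sine nonvanishing
  have hsj : ∀ j ∈ Finset.Ico 1 q, Real.sin (π*(j:ℝ)/q) ≠ 0 := by
    intro j hj
    obtain ⟨h1, h2⟩ := Finset.mem_Ico.mp hj
    exact sin_pi_mul_ne j q hq (Nat.not_dvd_of_pos_of_lt h1 h2)
  have hsk : ∀ k ∈ Finset.Ico 1 p, Real.sin (π*(k:ℝ)/p) ≠ 0 := by
    intro k hk
    obtain ⟨h1, h2⟩ := Finset.mem_Ico.mp hk
    exact sin_pi_mul_ne k p hp (Nat.not_dvd_of_pos_of_lt h1 h2)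
  have hspj : ∀ j ∈ Finset.Ico 1 q, Real.sin ((p:ℝ)*(π*(j:ℝ)/q)) ≠ 0 := by
    intro j hj
    obtain ⟨h1, h2⟩ := Finset.mem_Ico.mp hj
    have hnd : ¬ q ∣ p*j := by
      intro hd
      have := (Nat.Coprime.dvd_of_dvd_mul_left (hpq.symm) hd)
      exact absurd this (Nat.not_dvd_of_pos_of_lt h1 h2)
    have := sin_pi_mul_ne (p*j) q hq hnd
    rwa [show π*((p*j:ℕ):ℝ)/q = (p:ℝ)*(π*(j:ℝ)/q) by push_cast; ring] at this
  have hsqk : ∀ k ∈ Finset.Ico 1 p, Real.sin ((q:ℝ)*(π*(k:ℝ)/p)) ≠ 0 := by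
    intro k hk
    obtain ⟨h1, h2⟩ := Finset.mem_Ico.mp hk
    have hnd : ¬ p ∣ q*k := by
      intro hd
      have := (Nat.Coprime.dvd_of_dvd_mul_left hpq hd)
      exact absurd this (Nat.not_dvd_of_pos_of_lt h1 h2)
    have := sin_pi_mul_ne (q*k) p hp hnd
    rwa [show π*((q*k:ℕ):ℝ)/p = (q:ℝ)*(π*(k:ℝ)/p) by push_cast; ring] at this
  have hsjk : ∀ j ∈ Finset.Ico 1 q, ∀ k ∈ Finset.Ico 1 p,
      Real.sin (π*(j:ℝ)/q + π*(k:ℝ)/p) ≠ 0 := by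
    intro j hj k hk
    obtain ⟨hj1, hj2⟩ := Finset.mem_Ico.mp hj
    obtain ⟨hk1, hk2⟩ := Finset.mem_Ico.mp hk
    have harg : π*(j:ℝ)/q + π*(k:ℝ)/p = π*((j*p + k*q : ℕ):ℝ)/((p*q:ℕ):ℝ) := by
      push_cast
      field_simp
    rw [harg]
    apply sin_pi_mul_ne (j*p + k*q) (p*q) (Nat.mul_pos hp hq)
    intro hd
    rcases hd with ⟨c, hc⟩
    have hcZ : (j:ℤ)*p + k*q = p*q*c := by exact_mod_cast hc
    have hj2' : (j:ℤ) < q := by exact_mod_cast hj2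
    have hj1' : (1:ℤ) ≤ j := by exact_mod_cast hj1
    have hk2' : (k:ℤ) < p := by exact_mod_cast hk2
    have hk1' : (1:ℤ) ≤ k := by exact_mod_cast hk1
    have hpZ : (0:ℤ) < p := by exact_mod_cast hp
    have hqZ : (0:ℤ) < q := by exact_mod_cast hq
    have e1 : (j:ℤ)*p ≤ ((q:ℤ)-1)*p := mul_le_mul_of_nonneg_right (by omega) (by omega)
    have e2 : (k:ℤ)*q ≤ ((p:ℤ)-1)*q := mul_le_mul_of_nonneg_right (by omega) (by omega)
    have e3 : (1:ℤ)*p ≤ (j:ℤ)*p := mul_le_mul_of_nonneg_right (by omega) (by omega)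
    have e4 : (1:ℤ)*q ≤ (k:ℤ)*q := mul_le_mul_of_nonneg_right (by omega) (by omega)
    have epq : (0:ℤ) < (p:ℤ)*q := by positivity
    have hcpos : 0 < (c:ℤ) := by nlinarith
    have hclt : (c:ℤ) < 2 := by nlinarith
    have hc1 : c = 1 := by omega
    subst hc1
    have hdvdZ : ((q:ℤ)) ∣ (j:ℤ)*(p:ℤ) := ⟨(p:ℤ) - k, by linear_combination hcZ⟩
    have hdj : q ∣ j * p := by exact_mod_cast hdvdZ
    have := Nat.Coprime.dvd_of_dvd_mul_right (hpq.symm) hdj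
    exact absurd this (Nat.not_dvd_of_pos_of_lt hj1 hj2)
  set Sq := ∑ j ∈ Finset.Ico 1 q, Real.cot (π * j / q) * Real.cot (π * p * j / q) with hSq
  set Sp := ∑ k ∈ Finset.Ico 1 p, Real.cot (π * k / p) * Real.cot (π * q * k / p) with hSp
  have hiden : ∑ j ∈ Finset.Ico 1 q, ∑ k ∈ Finset.Ico 1 p,
      (Real.cot (π*(j:ℝ)/q) * Real.cot (π*(k:ℝ)/p)
        - Real.cot (π*(j:ℝ)/q + π*(k:ℝ)/p) * Real.cot (π*(j:ℝ)/q)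
        - Real.cot (π*(j:ℝ)/q + π*(k:ℝ)/p) * Real.cot (π*(k:ℝ)/p))
      = ((q-1:ℕ):ℝ) * ((p-1:ℕ):ℝ) := by
    rw [Finset.sum_congr rfl (fun j hj => Finset.sum_congr rfl (fun k hk =>
      cot_three _ _ (hsj j hj) (hsk k hk) (hsjk j hj k hk)))]
    simp [Nat.card_Ico, mul_comm]
  have hT1 : ∑ j ∈ Finset.Ico 1 q, ∑ k ∈ Finset.Ico 1 p,
      Real.cot (π*(j:ℝ)/q) * Real.cot (π*(k:ℝ)/p) = 0 := by
    rw [← Finset.sum_mul_sum, cot_sum_zero, zero_mul]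
  have hT2 : ∑ j ∈ Finset.Ico 1 q, ∑ k ∈ Finset.Ico 1 p,
      Real.cot (π*(j:ℝ)/q + π*(k:ℝ)/p) * Real.cot (π*(j:ℝ)/q)
      = p * Sq - ((q:ℝ)-1)*((q:ℝ)-2)/3 := by
    have inner : ∀ j ∈ Finset.Ico 1 q, ∑ k ∈ Finset.Ico 1 p,
        Real.cot (π*(j:ℝ)/q + π*(k:ℝ)/p) * Real.cot (π*(j:ℝ)/q)
        = ((p:ℝ) * Real.cot (π*(p:ℝ)*(j:ℝ)/q) - Real.cot (π*(j:ℝ)/q)) * Real.cot (π*(j:ℝ)/q) := by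
      intro j hj
      rw [← Finset.sum_mul]
      congr 1
      have hmul := cot_mul_sum p hp (π*(j:ℝ)/q) (exp_ne_one_of_sin_ne _ (hspj j hj))
      rw [Finset.range_eq_Ico, Finset.sum_eq_sum_Ico_succ_bot hp] at hmul
      simp only [zero_add, Nat.cast_zero, zero_mul, zero_div, add_zero] at hmul
      rw [show (p:ℝ)*(π*(j:ℝ)/q) = π*(p:ℝ)*(j:ℝ)/q from by ring] at hmul
      rw [Finset.sum_congr rfl (fun k _ => by
        rw [show π*(j:ℝ)/q + π*(k:ℝ)/p = π*(j:ℝ)/q + (k:ℝ)*π/p from by ring])]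
      linarith [hmul]
    rw [Finset.sum_congr rfl inner]
    rw [Finset.sum_congr rfl (fun j (hj : j ∈ Finset.Ico 1 q) => show
      ((p:ℝ) * Real.cot (π*(p:ℝ)*(j:ℝ)/q) - Real.cot (π*(j:ℝ)/q)) * Real.cot (π*(j:ℝ)/q)
      = (p:ℝ) * (Real.cot (π*(j:ℝ)/q) * Real.cot (π*(p:ℝ)*(j:ℝ)/q)) - (Real.cot (π*(j:ℝ)/q))^2
      from by ring)]
    rw [Finset.sum_sub_distrib, ← Finset.mul_sum, cot_sq_sum q hq, hSq]
  have hT3 : ∑ j ∈ Finset.Ico 1 q, ∑ k ∈ Finset.Ico 1 p,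
      Real.cot (π*(j:ℝ)/q + π*(k:ℝ)/p) * Real.cot (π*(k:ℝ)/p)
      = q * Sp - ((p:ℝ)-1)*((p:ℝ)-2)/3 := by
    rw [Finset.sum_comm]
    have inner : ∀ k ∈ Finset.Ico 1 p, ∑ j ∈ Finset.Ico 1 q,
        Real.cot (π*(j:ℝ)/q + π*(k:ℝ)/p) * Real.cot (π*(k:ℝ)/p)
        = ((q:ℝ) * Real.cot (π*(q:ℝ)*(k:ℝ)/p) - Real.cot (π*(k:ℝ)/p)) * Real.cot (π*(k:ℝ)/p) := by
      intro k hk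
      rw [← Finset.sum_mul]
      congr 1
      have hmul := cot_mul_sum q hq (π*(k:ℝ)/p) (exp_ne_one_of_sin_ne _ (hsqk k hk))
      rw [Finset.range_eq_Ico, Finset.sum_eq_sum_Ico_succ_bot hq] at hmul
      simp only [zero_add, Nat.cast_zero, zero_mul, zero_div, add_zero] at hmul
      rw [show (q:ℝ)*(π*(k:ℝ)/p) = π*(q:ℝ)*(k:ℝ)/p from by ring] at hmul
      rw [Finset.sum_congr rfl (fun j _ => by
        rw [show π*(j:ℝ)/q + π*(k:ℝ)/p = π*(k:ℝ)/p + (j:ℝ)*π/q from by ring])]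
      linarith [hmul]
    rw [Finset.sum_congr rfl inner]
    rw [Finset.sum_congr rfl (fun k (hk : k ∈ Finset.Ico 1 p) => show
      ((q:ℝ) * Real.cot (π*(q:ℝ)*(k:ℝ)/p) - Real.cot (π*(k:ℝ)/p)) * Real.cot (π*(k:ℝ)/p)
      = (q:ℝ) * (Real.cot (π*(k:ℝ)/p) * Real.cot (π*(q:ℝ)*(k:ℝ)/p)) - (Real.cot (π*(k:ℝ)/p))^2
      from by ring)]
    rw [Finset.sum_sub_distrib, ← Finset.mul_sum, cot_sq_sum p hp, hSp]
  have hsplit : ∑ j ∈ Finset.Ico 1 q, ∑ k ∈ Finset.Ico 1 p,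
      (Real.cot (π*(j:ℝ)/q) * Real.cot (π*(k:ℝ)/p)
        - Real.cot (π*(j:ℝ)/q + π*(k:ℝ)/p) * Real.cot (π*(j:ℝ)/q)
        - Real.cot (π*(j:ℝ)/q + π*(k:ℝ)/p) * Real.cot (π*(k:ℝ)/p))
      = (∑ j ∈ Finset.Ico 1 q, ∑ k ∈ Finset.Ico 1 p,
          Real.cot (π*(j:ℝ)/q) * Real.cot (π*(k:ℝ)/p))
        - (∑ j ∈ Finset.Ico 1 q, ∑ k ∈ Finset.Ico 1 p,
          Real.cot (π*(j:ℝ)/q + π*(k:ℝ)/p) * Real.cot (π*(j:ℝ)/q))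
        - (∑ j ∈ Finset.Ico 1 q, ∑ k ∈ Finset.Ico 1 p,
          Real.cot (π*(j:ℝ)/q + π*(k:ℝ)/p) * Real.cot (π*(k:ℝ)/p)) := by
    simp [Finset.sum_sub_distrib]
  rw [hsplit, hT1, hT2, hT3] at hiden
  have hcast1 : ((q-1:ℕ):ℝ) = (q:ℝ)-1 := by push_cast [Nat.cast_sub hq]; ring
  have hcast2 : ((p-1:ℕ):ℝ) = (p:ℝ)-1 := by push_cast [Nat.cast_sub hp]; ring
  rw [hcast1, hcast2] at hiden
  have hlin : (p:ℝ) * Sq + (q:ℝ) * Sp = ((p:ℝ)^2 + (q:ℝ)^2 + 1)/3 - (p:ℝ)*(q:ℝ) := by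
    linear_combination -hiden
  rw [dedekindSum, dedekindSum, ← hSq, ← hSp]
  field_simp
  linear_combination 12 * hlin
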